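/- The bounded solution of the Fourier-transformed Shercliff system iξ(b̂ - β∞) + û'' = 0, iξ û + b̂'' = 0 on (0,∞), with û(0)=b̂(0)=0, û→0, b̂→β∞, û', b̂' → 0 at infinity, is unique. -/

import Mathlib

open Filter Topology

/-- From `ContDiffOn ℝ 2` on `[0,∞)` we get first and second derivatives on `(0,∞)`. -/
lemma aux_derivs (u : ℝ → ℂ) (hu : ContDiffOn ℝ 2 u (Set.Ici 0)) :
    (∀ z ∈ Set.Ioi (0:ℝ), HasDerivAt u (deriv u z) z) ∧
    (∀ z ∈ Set.Ioi (0:ℝ), HasDerivAt (deriv u) (deriv (deriv u) z) z) := by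
  have h2 : ContDiffOn ℝ 2 u (Set.Ioi 0) := hu.mono Set.Ioi_subset_Ici_self
  constructor
  · intro z hz
    exact ((h2.differentiableOn (by norm_num)).differentiableAt
      (Ioi_mem_nhds hz)).hasDerivAt
  · intro z hz
    have hd : ContDiffOn ℝ 1 (deriv u) (Set.Ioi 0) :=
      h2.deriv_of_isOpen isOpen_Ioi (by norm_num)
    exact ((hd.differentiableOn (by norm_num)).differentiableAt (Ioi_mem_nhds hz)).hasDerivAt

/-- Key ODE uniqueness: if `h'' = μ² h` on `(0,∞)` with `Re μ > 0`, `h 0 = 0`,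
and `h, h' → 0` at infinity, then `h ≡ 0` on `[0,∞)`. -/
lemma aux_ode (μ : ℂ) (hμ : 0 < μ.re) (h h' h'' : ℝ → ℂ)
    (hc : ContinuousOn h (Set.Ici 0))
    (hd1 : ∀ z ∈ Set.Ioi (0:ℝ), HasDerivAt h (h' z) z)
    (hd2 : ∀ z ∈ Set.Ioi (0:ℝ), HasDerivAt h' (h'' z) z)
    (hode : ∀ z ∈ Set.Ioi (0:ℝ), h'' z = μ^2 * h z)
    (h0 : h 0 = 0)
    (hlim : Tendsto h atTop (𝓝 0)) (hlim' : Tendsto h' atTop (𝓝 0)) :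
    ∀ z ∈ Set.Ici (0:ℝ), h z = 0 := by
  have hcoe : ∀ t : ℝ, HasDerivAt (fun t : ℝ => (t : ℂ)) 1 t := by
    intro t
    simpa using (hasDerivAt_id t).ofReal_comp
  set w : ℝ → ℂ := fun z => h' z + μ * h z with hw
  -- w satisfies w' = μ w on (0,∞)
  have hwd : ∀ z ∈ Set.Ioi (0:ℝ), HasDerivAt w (μ * w z) z := by
    intro z hz
    have := (hd2 z hz).add ((hd1 z hz).const_mul μ)
    rw [hode z hz] at this
    refine this.congr_deriv ?_
    simp only [hw]
    ring
  have hwlim : Tendsto w atTop (𝓝 0) := by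
    have := hlim'.add (hlim.const_mul μ)
    simpa using this
  -- w vanishes on (0,∞)
  have hw0 : ∀ z ∈ Set.Ioi (0:ℝ), w z = 0 := by
    intro z₀ hz₀
    -- exponential damping: w z * exp (μ (z₀ - z)) is constant equal to w z₀ on [z₀,∞)
    have hconst : ∀ z, z₀ ≤ z → w z * Complex.exp (μ * ((z₀ : ℂ) - z)) = w z₀ := by
      intro z hz
      have he : ∀ t : ℝ, HasDerivAt (fun t : ℝ => Complex.exp (μ * ((z₀ : ℂ) - t)))
          (Complex.exp (μ * ((z₀ : ℂ) - t)) * (-μ)) t := by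
        intro t
        have h1 : HasDerivAt (fun t : ℝ => μ * ((z₀ : ℂ) - t)) (-μ) t := by
          have h2 : HasDerivAt (fun t : ℝ => ((z₀ : ℂ) - t)) (-1) t := by
            simpa using (hcoe t).const_sub (z₀ : ℂ)
          simpa using h2.const_mul μ
        simpa using h1.cexp
      have hgd : ∀ t ∈ Set.Ico z₀ z, HasDerivWithinAt
          (fun t => w t * Complex.exp (μ * ((z₀ : ℂ) - t))) 0 (Set.Ici t) t := by
        intro t ht
        have ht' : t ∈ Set.Ioi (0:ℝ) := lt_of_lt_of_le hz₀ ht.1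
        have := (hwd t ht').mul (he t)
        have h0 : μ * w t * Complex.exp (μ * ((z₀ : ℂ) - t)) +
            w t * (Complex.exp (μ * ((z₀ : ℂ) - t)) * -μ) = 0 := by ring
        rw [h0] at this
        exact this.hasDerivWithinAt
      have hgc : ContinuousOn (fun t => w t * Complex.exp (μ * ((z₀ : ℂ) - t)))
          (Set.Icc z₀ z) := by
        intro t ht
        have ht' : t ∈ Set.Ioi (0:ℝ) := lt_of_lt_of_le hz₀ ht.1
        exact ((hwd t ht').continuousAt.mul (he t).continuousAt).continuousWithinAt
      have := constant_of_has_deriv_right_zero hgc hgd z ⟨hz, le_refl z⟩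
      simpa using this
    -- the damped function tends to 0 at infinity, hence w z₀ = 0
    have hbound : ∀ᶠ z in atTop, ‖w z * Complex.exp (μ * ((z₀ : ℂ) - z))‖ ≤ ‖w z‖ := by
      filter_upwards [eventually_ge_atTop z₀] with z hz
      rw [norm_mul]
      have : ‖Complex.exp (μ * ((z₀ : ℂ) - z))‖ ≤ 1 := by
        rw [Complex.norm_exp]
        apply Real.exp_le_one_iff.mpr
        have : (μ * ((z₀ : ℂ) - z)).re = μ.re * (z₀ - z) := by
          simp [Complex.mul_re, Complex.sub_re, Complex.sub_im]
        rw [this]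
        nlinarith [hμ]
      calc ‖w z‖ * ‖Complex.exp (μ * ((z₀ : ℂ) - z))‖ ≤ ‖w z‖ * 1 := by
            exact mul_le_mul_of_nonneg_left this (norm_nonneg _)
        _ = ‖w z‖ := mul_one _
    have htend : Tendsto (fun z => w z * Complex.exp (μ * ((z₀ : ℂ) - z))) atTop (𝓝 0) :=
      squeeze_zero_norm' hbound (by simpa using hwlim.norm)
    have heqv : (fun z => w z * Complex.exp (μ * ((z₀ : ℂ) - z))) =ᶠ[atTop]
        (fun _ => w z₀) := by
      filter_upwards [eventually_ge_atTop z₀] with z hz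
      exact hconst z hz
    have : Tendsto (fun _ : ℝ => w z₀) atTop (𝓝 0) := htend.congr' heqv
    exact tendsto_nhds_unique tendsto_const_nhds this
  -- now h' = -μ h on (0,∞); the function h z * exp (μ z) is constant
  have he' : ∀ t : ℝ, HasDerivAt (fun t : ℝ => Complex.exp (μ * t))
      (Complex.exp (μ * t) * μ) t := by
    intro t
    have h1 : HasDerivAt (fun t : ℝ => μ * (t : ℂ)) μ t := by
      simpa using (hcoe t).const_mul μ
    simpa using h1.cexp
  have hφconst : ∀ z > (0:ℝ), ∀ z₀, 0 < z₀ → z₀ ≤ z →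
      h z * Complex.exp (μ * z) = h z₀ * Complex.exp (μ * z₀) := by
    intro z hz z₀ hz₀ hle
    have hgd : ∀ t ∈ Set.Ico z₀ z, HasDerivWithinAt
        (fun t => h t * Complex.exp (μ * t)) 0 (Set.Ici t) t := by
      intro t ht
      have ht' : t ∈ Set.Ioi (0:ℝ) := lt_of_lt_of_le hz₀ ht.1
      have hwt : h' t + μ * h t = 0 := hw0 t ht'
      have := (hd1 t ht').mul (he' t)
      have h0 : h' t * Complex.exp (μ * t) + h t * (Complex.exp (μ * t) * μ) = 0 := by
        linear_combination Complex.exp (μ * t) * hwt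
      rw [h0] at this
      exact this.hasDerivWithinAt
    have hgc : ContinuousOn (fun t => h t * Complex.exp (μ * t)) (Set.Icc z₀ z) := by
      intro t ht
      have ht' : t ∈ Set.Ioi (0:ℝ) := lt_of_lt_of_le hz₀ ht.1
      exact ((hd1 t ht').continuousAt.mul (he' t).continuousAt).continuousWithinAt
    exact (constant_of_has_deriv_right_zero hgc hgd z ⟨hle, le_refl z⟩)
  -- let z₀ → 0⁺ and use continuity of h at 0
  intro z hz
  rcases eq_or_lt_of_le (Set.mem_Ici.mp hz) with rfl | hz'
  · exact h0
  have hczero : Tendsto (fun z₀ : ℝ => h z₀ * Complex.exp (μ * z₀)) (𝓝[>] 0) (𝓝 0) := by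
    have hh : Tendsto h (𝓝[>] (0:ℝ)) (𝓝 (h 0)) :=
      (hc 0 Set.self_mem_Ici).tendsto.mono_left
        (nhdsWithin_mono 0 Set.Ioi_subset_Ici_self)
    have hex : Tendsto (fun z₀ : ℝ => Complex.exp (μ * z₀)) (𝓝[>] (0:ℝ))
        (𝓝 (Complex.exp (μ * (0:ℝ)))) :=
      ((he' 0).continuousAt.tendsto.mono_left nhdsWithin_le_nhds)
    have := hh.mul hex
    simpa [h0] using this
  have heqv : (fun z₀ : ℝ => h z₀ * Complex.exp (μ * z₀)) =ᶠ[𝓝[>] (0:ℝ)]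
      (fun _ => h z * Complex.exp (μ * z)) := by
    filter_upwards [Ioc_mem_nhdsGT_of_mem (Set.mem_Ico.mpr ⟨le_refl (0:ℝ), hz'⟩)] with z₀ hz₀
    exact (hφconst z hz' z₀ hz₀.1 hz₀.2).symm
  have hunique : h z * Complex.exp (μ * z) = 0 :=
    tendsto_nhds_unique tendsto_const_nhds (hczero.congr' heqv)
  exact (mul_eq_zero.mp hunique).resolve_right (Complex.exp_ne_zero _)

/-- uniqueness of the bounded solution of the Fourier-transformed
Shercliff system: two C² solutions with the same boundary conditions and decay
coincide on `[0,∞)`. -/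
theorem stmt_3 (ξ : ℝ) (hξ : ξ ≠ 0) (βinf : ℂ)
    (u₁ b₁ u₂ b₂ : ℝ → ℂ)
    (hu₁ : ContDiffOn ℝ 2 u₁ (Set.Ici 0)) (hb₁ : ContDiffOn ℝ 2 b₁ (Set.Ici 0))
    (hu₂ : ContDiffOn ℝ 2 u₂ (Set.Ici 0)) (hb₂ : ContDiffOn ℝ 2 b₂ (Set.Ici 0))
    (hbdd₁ : Bornology.IsBounded (u₁ '' Set.Ici 0 ∪ b₁ '' Set.Ici 0))
    (hbdd₂ : Bornology.IsBounded (u₂ '' Set.Ici 0 ∪ b₂ '' Set.Ici 0))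
    (heq₁ : ∀ z ∈ Set.Ioi (0:ℝ),
        Complex.I * (ξ : ℂ) * (b₁ z - βinf) + deriv (deriv u₁) z = 0 ∧
        Complex.I * (ξ : ℂ) * u₁ z + deriv (deriv b₁) z = 0)
    (heq₂ : ∀ z ∈ Set.Ioi (0:ℝ),
        Complex.I * (ξ : ℂ) * (b₂ z - βinf) + deriv (deriv u₂) z = 0 ∧
        Complex.I * (ξ : ℂ) * u₂ z + deriv (deriv b₂) z = 0)
    (hbc₁ : u₁ 0 = 0 ∧ b₁ 0 = 0) (hbc₂ : u₂ 0 = 0 ∧ b₂ 0 = 0)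
    (hlim₁ : Tendsto u₁ atTop (𝓝 0) ∧ Tendsto b₁ atTop (𝓝 βinf))
    (hlim₂ : Tendsto u₂ atTop (𝓝 0) ∧ Tendsto b₂ atTop (𝓝 βinf))
    (hlim'₁ : Tendsto (deriv u₁) atTop (𝓝 0) ∧ Tendsto (deriv b₁) atTop (𝓝 0))
    (hlim'₂ : Tendsto (deriv u₂) atTop (𝓝 0) ∧ Tendsto (deriv b₂) atTop (𝓝 0)) :
    ∀ z ∈ Set.Ici (0:ℝ), u₁ z = u₂ z ∧ b₁ z = b₂ z := by
  obtain ⟨du₁, ddu₁⟩ := aux_derivs u₁ hu₁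
  obtain ⟨db₁, ddb₁⟩ := aux_derivs b₁ hb₁
  obtain ⟨du₂, ddu₂⟩ := aux_derivs u₂ hu₂
  obtain ⟨db₂, ddb₂⟩ := aux_derivs b₂ hb₂
  -- square roots of ∓ I ξ with positive real part
  set r : ℝ := Real.sqrt (|ξ| / 2) with hr
  have hrpos : 0 < r := Real.sqrt_pos.mpr (by positivity)
  have hrsq : ((r : ℂ))^2 = ((|ξ| : ℝ) : ℂ) / 2 := by
    rw [hr, ← Complex.ofReal_pow, Real.sq_sqrt (by positivity)]
    push_cast
    ring
  set μ₁ : ℂ := (r : ℂ) * (1 - Complex.I * (Real.sign ξ : ℝ)) with hμ₁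
  set μ₂ : ℂ := (r : ℂ) * (1 + Complex.I * (Real.sign ξ : ℝ)) with hμ₂
  have hsign : ((Real.sign ξ : ℝ) : ℂ) * |ξ| = ξ := by
    rcases hξ.lt_or_gt with hlt | hlt
    · rw [Real.sign_of_neg hlt, abs_of_neg hlt]; push_cast; ring
    · rw [Real.sign_of_pos hlt, abs_of_pos hlt]; push_cast; ring
  have hsignsq : ((Real.sign ξ : ℝ) : ℂ)^2 = 1 := by
    rcases hξ.lt_or_gt with hlt | hlt
    · rw [Real.sign_of_neg hlt]; push_cast; ring
    · rw [Real.sign_of_pos hlt]; push_cast; ring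
  have hμ₁re : 0 < μ₁.re := by
    have : μ₁.re = r := by
      simp [hμ₁, Complex.mul_re, Complex.sub_re, Complex.sub_im, Complex.mul_im]
    rw [this]; exact hrpos
  have hμ₂re : 0 < μ₂.re := by
    have : μ₂.re = r := by
      simp [hμ₂, Complex.mul_re, Complex.add_re, Complex.add_im, Complex.mul_im]
    rw [this]; exact hrpos
  have hIs : (Complex.I * ((Real.sign ξ : ℝ) : ℂ))^2 = -1 := by
    linear_combination Complex.I^2 * hsignsq + Complex.I_sq
  have hμ₁sq : μ₁^2 = -(Complex.I * ξ) := by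
    rw [hμ₁]
    linear_combination (1 - Complex.I * ((Real.sign ξ : ℝ) : ℂ))^2 * hrsq +
      (((|ξ| : ℝ) : ℂ)/2) * hIs - Complex.I * hsign
  have hμ₂sq : μ₂^2 = Complex.I * ξ := by
    rw [hμ₂]
    linear_combination (1 + Complex.I * ((Real.sign ξ : ℝ) : ℂ))^2 * hrsq +
      (((|ξ| : ℝ) : ℂ)/2) * hIs + Complex.I * hsign
  -- the sum f = (u₁ - u₂) + (b₁ - b₂) solves f'' = μ₁² f
  have hf0 := aux_ode μ₁ hμ₁re
    (fun z => (u₁ z - u₂ z) + (b₁ z - b₂ z))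
    (fun z => (deriv u₁ z - deriv u₂ z) + (deriv b₁ z - deriv b₂ z))
    (fun z => (deriv (deriv u₁) z - deriv (deriv u₂) z) +
      (deriv (deriv b₁) z - deriv (deriv b₂) z))
    (((hu₁.continuousOn.sub hu₂.continuousOn).add (hb₁.continuousOn.sub hb₂.continuousOn)))
    (fun z hz => ((du₁ z hz).sub (du₂ z hz)).add ((db₁ z hz).sub (db₂ z hz)))
    (fun z hz => ((ddu₁ z hz).sub (ddu₂ z hz)).add ((ddb₁ z hz).sub (ddb₂ z hz)))
    (by
      intro z hz
      obtain ⟨e1, e2⟩ := heq₁ z hz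
      obtain ⟨e3, e4⟩ := heq₂ z hz
      rw [hμ₁sq]
      linear_combination e1 - e3 + e2 - e4)
    (by simp [hbc₁.1, hbc₁.2, hbc₂.1, hbc₂.2])
    (by simpa using (hlim₁.1.sub hlim₂.1).add (hlim₁.2.sub hlim₂.2))
    (by simpa using (hlim'₁.1.sub hlim'₂.1).add (hlim'₁.2.sub hlim'₂.2))
  -- the difference g = (u₁ - u₂) - (b₁ - b₂) solves g'' = μ₂² g
  have hg0 := aux_ode μ₂ hμ₂re
    (fun z => (u₁ z - u₂ z) - (b₁ z - b₂ z))
    (fun z => (deriv u₁ z - deriv u₂ z) - (deriv b₁ z - deriv b₂ z))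
    (fun z => (deriv (deriv u₁) z - deriv (deriv u₂) z) -
      (deriv (deriv b₁) z - deriv (deriv b₂) z))
    (((hu₁.continuousOn.sub hu₂.continuousOn).sub (hb₁.continuousOn.sub hb₂.continuousOn)))
    (fun z hz => ((du₁ z hz).sub (du₂ z hz)).sub ((db₁ z hz).sub (db₂ z hz)))
    (fun z hz => ((ddu₁ z hz).sub (ddu₂ z hz)).sub ((ddb₁ z hz).sub (ddb₂ z hz)))
    (by
      intro z hz
      obtain ⟨e1, e2⟩ := heq₁ z hz
      obtain ⟨e3, e4⟩ := heq₂ z hz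
      rw [hμ₂sq]
      linear_combination e1 - e3 - e2 + e4)
    (by simp [hbc₁.1, hbc₁.2, hbc₂.1, hbc₂.2])
    (by simpa using (hlim₁.1.sub hlim₂.1).sub (hlim₁.2.sub hlim₂.2))
    (by simpa using (hlim'₁.1.sub hlim'₂.1).sub (hlim'₁.2.sub hlim'₂.2))
  intro z hz
  have hf : (u₁ z - u₂ z) + (b₁ z - b₂ z) = 0 := hf0 z hz
  have hg : (u₁ z - u₂ z) - (b₁ z - b₂ z) = 0 := hg0 z hz
  constructor
  · linear_combination (hf + hg) / 2
  · linear_combination (hf - hg) / 2
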